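/- arXiv:1805.10698 — 6 statements merged into one kernel-verified Lean document; each statement's English description precedes it below -/
import Mathlib

section
/- Let n, t ≥ 1 and W ≥ 2 be integers. For each g ∈ {1,...,t}, let L_g(x) := ∑_{i=1}^n w_{g,i} x_i with integer weights satisfying |w_{g,i}| ≤ W, and let T_g ∈ ℤ with |T_g| ≤ W. Let v_1,...,v_t be nonpositive integers and T ∈ ℤ, and define C(x) := [∑_{g=1}^t v_g·[L_g(x) = T_g] ≥ T] and, for each prime p, C^p(x) := [∑_{g=1}^t v_g·[L_g(x) ≡ T_g (mod p)] ≥ T]. Then: (a) for every x ∈ {0,1}^n and every prime p, C(x) = 0 implies C^p(x) = 0; and (b) if M is a positive integer such that the number of primes ≤ M is at least 2·t·log₂((n+1)·W), then for every x ∈ {0,1}^n with C(x) = 1, at least half of the primes p ≤ M satisfy C^p(x) = 1. (Hence C is a 'gap OR', over the primes p ≤ M, of the circuits C^p: on every input, either all C^p output 0, or at least half of them output 1.) -/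
lemma aux_primeFactors_card_le (m N : ℕ) (hm : m ≠ 0) (hmN : m ≤ N) :
    m.primeFactors.card ≤ Nat.log 2 N := by
  have h1 : 2 ^ m.primeFactors.card ≤ ∏ p ∈ m.primeFactors, p :=
    Finset.pow_card_le_prod _ _ _ (fun p hp => (Nat.prime_of_mem_primeFactors hp).two_le)
  have h2 : ∏ p ∈ m.primeFactors, p ≤ m :=
    Nat.le_of_dvd (Nat.pos_of_ne_zero hm) (Nat.prod_primeFactors_dvd m)
  have hN : N ≠ 0 := by omega
  exact (Nat.le_log_iff_pow_le one_lt_two hN).mpr (le_trans h1 (le_trans h2 hmN))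

theorem stmt_2 (n t W : ℕ) (hn : 1 ≤ n) (ht : 1 ≤ t) (hW : 2 ≤ W)
    (w : Fin t → Fin n → ℤ) (hw : ∀ g i, |w g i| ≤ (W : ℤ))
    (Tg : Fin t → ℤ) (hTg : ∀ g, |Tg g| ≤ (W : ℤ))
    (v : Fin t → ℤ) (hv : ∀ g, v g ≤ 0) (T : ℤ) :
    -- (a) one-sided error: C(x) = 0 implies Cᵖ(x) = 0, for every prime p
    (∀ x : Fin n → ℤ, (∀ i, x i = 0 ∨ x i = 1) → ∀ p : ℕ, p.Prime →
      ¬ (T ≤ ∑ g, v g * (if ∑ i, w g i * x i = Tg g then 1 else 0)) →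
      ¬ (T ≤ ∑ g, v g *
            (if (∑ i, w g i * x i) % (p : ℤ) = Tg g % (p : ℤ) then 1 else 0)))
    ∧
    -- (b) if C(x) = 1 then at least half of the primes p ≤ M satisfy Cᵖ(x) = 1
    (∀ M : ℕ, 0 < M →
      2 * t * Nat.log 2 ((n + 1) * W) ≤
          ((Finset.range (M + 1)).filter Nat.Prime).card →
      ∀ x : Fin n → ℤ, (∀ i, x i = 0 ∨ x i = 1) →
        (T ≤ ∑ g, v g * (if ∑ i, w g i * x i = Tg g then 1 else 0)) →
        ((Finset.range (M + 1)).filter Nat.Prime).card ≤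
          2 * (((Finset.range (M + 1)).filter Nat.Prime).filter
            (fun p : ℕ => T ≤ ∑ g, v g *
              (if (∑ i, w g i * x i) % (p : ℤ) = Tg g % (p : ℤ) then 1 else 0))).card) := by
  classical
  constructor
  · intro x hx p hp hC hCp
    apply hC
    refine le_trans hCp (Finset.sum_le_sum ?_)
    intro g _
    by_cases h : (∑ i, w g i * x i) = Tg g
    · simp [h]
    · simp only [h, if_false, mul_zero]
      split
      · exact mul_nonpos_of_nonpos_of_nonneg (hv g) one_pos.le
      · simp
  · intro M hM hcard x hx hC
    set P := (Finset.range (M + 1)).filter Nat.Prime with hP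
    set z : Fin t → ℤ := fun g => (∑ i, w g i * x i) - Tg g with hz
    have hzbound : ∀ g, (z g).natAbs ≤ (n + 1) * W := by
      intro g
      have h1 : |∑ i, w g i * x i| ≤ (n : ℤ) * W := by
        calc |∑ i, w g i * x i| ≤ ∑ i, |w g i * x i| := Finset.abs_sum_le_sum_abs _ _
        _ ≤ ∑ _i : Fin n, (W : ℤ) := by
            refine Finset.sum_le_sum (fun i _ => ?_)
            rw [abs_mul]
            rcases hx i with h | h <;> simp [h] <;> nlinarith [hw g i, abs_nonneg (w g i)]
        _ = (n : ℤ) * W := by simp [mul_comm]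
      have h2 : |z g| ≤ ((n + 1) * W : ℕ) := by
        simp only [hz]
        push_cast
        calc |(∑ i, w g i * x i) - Tg g| ≤ |∑ i, w g i * x i| + |Tg g| := abs_sub _ _
        _ ≤ (n : ℤ) * W + W := add_le_add h1 (hTg g)
        _ = ((n : ℤ) + 1) * W := by ring
      rw [Int.abs_eq_natAbs] at h2
      exact_mod_cast h2
    set Bad := P.filter (fun p : ℕ => ∃ g, z g ≠ 0 ∧ (p : ℤ) ∣ z g) with hBad
    have hBadsub : Bad ⊆ Finset.univ.biUnion (fun g : Fin t => ((z g).natAbs).primeFactors) := by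
      intro p hp
      simp only [hBad, Finset.mem_filter] at hp
      obtain ⟨hpP, g, hg0, hgd⟩ := hp
      have hpprime : p.Prime := (Finset.mem_filter.mp hpP).2
      refine Finset.mem_biUnion.mpr ⟨g, Finset.mem_univ g, ?_⟩
      refine Nat.mem_primeFactors.mpr ⟨hpprime, ?_, by simpa using hg0⟩
      have := Int.natAbs_dvd_natAbs.mpr hgd
      simpa using this
    have hBadcard : Bad.card ≤ t * Nat.log 2 ((n + 1) * W) := by
      calc Bad.card ≤ (Finset.univ.biUnion (fun g : Fin t => ((z g).natAbs).primeFactors)).card :=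
            Finset.card_le_card hBadsub
      _ ≤ ∑ g : Fin t, ((z g).natAbs).primeFactors.card := Finset.card_biUnion_le
      _ ≤ ∑ _g : Fin t, Nat.log 2 ((n + 1) * W) := by
          refine Finset.sum_le_sum (fun g _ => ?_)
          by_cases h : (z g).natAbs = 0
          · simp [h]
          · exact aux_primeFactors_card_le _ _ h (hzbound g)
      _ = t * Nat.log 2 ((n + 1) * W) := by simp [mul_comm]
    have hgood : ∀ p ∈ P \ Bad, T ≤ ∑ g, v g *
        (if (∑ i, w g i * x i) % (p : ℤ) = Tg g % (p : ℤ) then 1 else 0) := by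
      intro p hp
      rw [Finset.mem_sdiff] at hp
      obtain ⟨hpP, hpnB⟩ := hp
      have hpprime : p.Prime := (Finset.mem_filter.mp hpP).2
      have hall : ∀ g, ¬(z g ≠ 0 ∧ (p : ℤ) ∣ z g) := by
        intro g hg
        exact hpnB (Finset.mem_filter.mpr ⟨hpP, g, hg⟩)
      have heq : (∑ g, v g * (if (∑ i, w g i * x i) % (p : ℤ) = Tg g % (p : ℤ) then 1 else 0))
          = ∑ g, v g * (if ∑ i, w g i * x i = Tg g then 1 else 0) := by
        refine Finset.sum_congr rfl (fun g _ => ?_)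
        congr 1
        by_cases h : (∑ i, w g i * x i) = Tg g
        · simp [h]
        · have hz0 : z g ≠ 0 := by simpa [hz, sub_eq_zero] using h
          have hnd : ¬ (p : ℤ) ∣ z g := fun hd => hall g ⟨hz0, hd⟩
          have : ¬ (∑ i, w g i * x i) % (p : ℤ) = Tg g % (p : ℤ) := by
            intro hmod
            exact hnd (Int.dvd_of_emod_eq_zero
              (Int.emod_emod_of_dvd _ dvd_rfl ▸
                Int.emod_eq_emod_iff_emod_sub_eq_zero.mp hmod))
          simp [h, this]
      rw [heq]; exact hC
    have hsub : P \ Bad ⊆ P.filter (fun p : ℕ => T ≤ ∑ g, v g *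
        (if (∑ i, w g i * x i) % (p : ℤ) = Tg g % (p : ℤ) then 1 else 0)) := by
      intro p hp
      exact Finset.mem_filter.mpr ⟨(Finset.mem_sdiff.mp hp).1, hgood p hp⟩
    have hBsubP : Bad ⊆ P := Finset.filter_subset _ _
    have h1 : P.card - Bad.card ≤ (P.filter (fun p : ℕ => T ≤ ∑ g, v g *
        (if (∑ i, w g i * x i) % (p : ℤ) = Tg g % (p : ℤ) then 1 else 0))).card := by
      rw [← Finset.card_sdiff_of_subset hBsubP]
      exact Finset.card_le_card hsub
    rw [mul_assoc] at hcard
    omega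
end

section
/- Let n, t ≥ 1 and W ≥ 1 be integers. For each g ∈ {1,...,t}, let L_g(x) := ∑_{i=1}^n w_{g,i} x_i with integer weights satisfying |w_{g,i}| ≤ W, and let T_g ∈ ℤ with |T_g| ≤ W. If M is a positive integer such that the number of primes ≤ M is strictly greater than t·2^n·log₂((n+1)·W), then there exists a prime m ≤ M such that for every x ∈ {0,1}^n and every g ∈ {1,...,t}: L_g(x) ≡ T_g (mod m) if and only if L_g(x) = T_g. -/
set_option synthInstance.maxHeartbeats 1000000
set_option maxHeartbeats 1000000

lemma card_primeFactors_le_log (d : ℕ) : d.primeFactors.card ≤ Nat.log 2 d := by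
  rcases eq_or_ne d 0 with rfl | hd
  · simp
  have h1 : 2 ^ d.primeFactors.card ≤ ∏ p ∈ d.primeFactors, p :=
    Finset.pow_card_le_prod _ _ _ (fun p hp => (Nat.prime_of_mem_primeFactors hp).two_le)
  have h2 : ∏ p ∈ d.primeFactors, p ≤ d :=
    Nat.le_of_dvd (Nat.pos_of_ne_zero hd) (Nat.prod_primeFactors_dvd d)
  exact (Nat.le_log_iff_pow_le one_lt_two hd).mpr (h1.trans h2)

theorem stmt_4 (n t W : ℕ) (hn : 1 ≤ n) (ht : 1 ≤ t) (hW : 1 ≤ W)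
    (w : Fin t → Fin n → ℤ) (hw : ∀ g i, |w g i| ≤ (W : ℤ))
    (Tg : Fin t → ℤ) (hTg : ∀ g, |Tg g| ≤ (W : ℤ))
    (M : ℕ) (hM : 0 < M)
    (hcard : t * 2 ^ n * Nat.log 2 ((n + 1) * W) <
      ((Finset.range (M + 1)).filter Nat.Prime).card) :
    ∃ m : ℕ, m ≤ M ∧ m.Prime ∧
      ∀ x : Fin n → ℤ, (∀ i, x i = 0 ∨ x i = 1) → ∀ g : Fin t,
        ((∑ i, w g i * x i) ≡ Tg g [ZMOD (m : ℤ)] ↔ (∑ i, w g i * x i) = Tg g) := by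
  classical
  set D : (Fin n → Fin 2) → Fin t → ℤ :=
    fun y g => (∑ i, w g i * ((y i : ℕ) : ℤ)) - Tg g with hD
  -- bound on |D|
  have hDbound : ∀ y g, (D y g).natAbs ≤ (n + 1) * W := by
    intro y g
    have habs : |D y g| ≤ ((n : ℤ) + 1) * W := by
      have h1 : |∑ i, w g i * ((y i : ℕ) : ℤ)| ≤ (n : ℤ) * W := by
        calc |∑ i, w g i * ((y i : ℕ) : ℤ)| ≤ ∑ i, |w g i * ((y i : ℕ) : ℤ)| :=
              Finset.abs_sum_le_sum_abs _ _
          _ ≤ ∑ _i : Fin n, (W : ℤ) := by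
              apply Finset.sum_le_sum
              intro i _
              rw [abs_mul]
              have hy : |((y i : ℕ) : ℤ)| ≤ 1 := by
                have := (y i).is_lt
                interval_cases h : (y i : ℕ) <;> simp
              calc |w g i| * |((y i : ℕ) : ℤ)| ≤ |w g i| * 1 := by
                    exact mul_le_mul_of_nonneg_left hy (abs_nonneg _)
                _ = |w g i| := mul_one _
                _ ≤ W := hw g i
          _ = (n : ℤ) * W := by simp [mul_comm]
      calc |D y g| ≤ |∑ i, w g i * ((y i : ℕ) : ℤ)| + |Tg g| := abs_sub _ _
        _ ≤ (n : ℤ) * W + W := add_le_add h1 (hTg g)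
        _ = ((n : ℤ) + 1) * W := by ring
    have : ((D y g).natAbs : ℤ) ≤ (((n + 1) * W : ℕ) : ℤ) := by
      rw [Int.abs_eq_natAbs] at habs
      push_cast
      push_cast at habs
      linarith
    exact_mod_cast this
  -- bad primes
  set P := (Finset.range (M + 1)).filter Nat.Prime with hP
  set B := P.filter (fun p : ℕ => ∃ y g, D y g ≠ 0 ∧ ((p : ℕ) : ℤ) ∣ D y g) with hB
  have hBsub : B ⊆ (Finset.univ : Finset ((Fin n → Fin 2) × Fin t)).biUnion
      (fun q => (D q.1 q.2).natAbs.primeFactors) := by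
    intro p hp
    rw [hB, Finset.mem_filter] at hp
    obtain ⟨hpP, y, g, hne, hdvd⟩ := hp
    have hprime : p.Prime := (Finset.mem_filter.mp hpP).2
    rw [Finset.mem_biUnion]
    refine ⟨(y, g), Finset.mem_univ _, ?_⟩
    rw [Nat.mem_primeFactors]
    refine ⟨hprime, ?_, by simpa using hne⟩
    rwa [Int.natCast_dvd_natCast.symm, Int.dvd_natAbs]
  have hBcard : B.card ≤ t * 2 ^ n * Nat.log 2 ((n + 1) * W) := by
    calc B.card ≤ ∑ q : (Fin n → Fin 2) × Fin t, (D q.1 q.2).natAbs.primeFactors.card :=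
          (Finset.card_le_card hBsub).trans (Finset.card_biUnion_le)
      _ ≤ ∑ _q : (Fin n → Fin 2) × Fin t, Nat.log 2 ((n + 1) * W) := by
          apply Finset.sum_le_sum
          intro q _
          exact (card_primeFactors_le_log _).trans (Nat.log_mono_right (hDbound q.1 q.2))
      _ = (2 ^ n * t) * Nat.log 2 ((n + 1) * W) := by
          simp [Finset.sum_const, Fintype.card_prod, Fintype.card_fun]
      _ = t * 2 ^ n * Nat.log 2 ((n + 1) * W) := by ring
  have hlt : B.card < P.card := lt_of_le_of_lt hBcard hcard
  have hnotsub : ¬ P ⊆ B := fun h => absurd (Finset.card_le_card h) (not_le.mpr hlt)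
  obtain ⟨p, hpP, hpB⟩ := Finset.not_subset.mp hnotsub
  have hpP' := Finset.mem_filter.mp hpP
  refine ⟨p, Nat.lt_succ_iff.mp (Finset.mem_range.mp hpP'.1), hpP'.2, ?_⟩
  intro x hx g
  set y : Fin n → Fin 2 := fun i => if x i = 1 then 1 else 0 with hy
  have hxy : ∀ i, ((y i : ℕ) : ℤ) = x i := by
    intro i
    rcases hx i with h | h <;> simp [hy, h]
  have hsum : (∑ i, w g i * x i) = ∑ i, w g i * ((y i : ℕ) : ℤ) := by
    apply Finset.sum_congr rfl
    intro i _
    rw [hxy i]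
  rcases eq_or_ne (D y g) 0 with h0 | h0
  · have : (∑ i, w g i * x i) = Tg g := by
      rw [hsum]; have := sub_eq_zero.mp h0; exact this
    simp [this, Int.ModEq.refl]
  · have hnd : ¬ (p : ℤ) ∣ D y g := by
      intro hdvd
      exact hpB (Finset.mem_filter.mpr ⟨hpP, y, g, h0, hdvd⟩)
    constructor
    · intro hmod
      exfalso
      apply hnd
      have := Int.ModEq.dvd hmod
      rw [hsum] at this
      have h2 : (p : ℤ) ∣ -(Tg g - ∑ i, w g i * ((y i : ℕ) : ℤ)) := dvd_neg.mpr this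
      simpa [hD, neg_sub] using h2
    · intro heq
      exfalso
      apply h0
      rw [hD]
      simp only
      rw [← hsum, heq, sub_self]
end

section
/- Let d, B, D ≥ 1 be integers, and let a_1,...,a_d and T be nonnegative integers, each strictly less than 2^{B·D}. For j ∈ {1,...,D}, define the j-th B-bit blocks (counted from the least significant bit) a_{i,j} := ⌊a_i / 2^{B(j−1)}⌋ mod 2^B and T_j := ⌊T / 2^{B(j−1)}⌋ mod 2^B. Then ∑_{i=1}^d a_i = T if and only if there exists a sequence of integers c_0, c_1, ..., c_D with c_0 = c_D = 0 and 0 ≤ c_j ≤ d−1 for all 1 ≤ j ≤ D−1, such that for every j ∈ {1,...,D}: ∑_{i=1}^d a_{i,j} + c_{j−1} = T_j + 2^B·c_j. Moreover, when such a sequence of carries exists, it is unique. -/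
-- invariant lemma
lemma carry_invariant (d B D : ℕ) (a : Fin d → ℕ) (T : ℕ)
    (c : Fin (D + 1) → ℕ) (h0 : c 0 = 0)
    (heq : ∀ j : Fin D,
      (∑ i, a i / 2 ^ (B * (j : ℕ)) % 2 ^ B) + c j.castSucc
        = T / 2 ^ (B * (j : ℕ)) % 2 ^ B + 2 ^ B * c j.succ) :
    ∀ n (hn : n ≤ D),
      (∑ i, a i % 2 ^ (B * n)) = T % 2 ^ (B * n) + 2 ^ (B * n) * c ⟨n, by omega⟩ := by
  intro n
  induction n with
  | zero =>
    intro _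
    have : (⟨0, by omega⟩ : Fin (D + 1)) = 0 := rfl
    simp [this, h0, Nat.mod_one]
  | succ n ih =>
    intro hn
    have hn' : n ≤ D := by omega
    have hE := heq ⟨n, by omega⟩
    simp only [Fin.castSucc_mk, Fin.succ_mk] at hE
    have ihn := ih hn'
    have hsplit : ∀ x : ℕ, x % 2 ^ (B * (n + 1))
        = x % 2 ^ (B * n) + 2 ^ (B * n) * (x / 2 ^ (B * n) % 2 ^ B) := by
      intro x
      have : (2 : ℕ) ^ (B * (n + 1)) = 2 ^ (B * n) * 2 ^ B := by
        rw [← pow_add]; ring_nf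
      rw [this, Nat.mod_mul]
    calc (∑ i, a i % 2 ^ (B * (n + 1)))
        = (∑ i, a i % 2 ^ (B * n)) + 2 ^ (B * n) * (∑ i, a i / 2 ^ (B * n) % 2 ^ B) := by
          simp_rw [hsplit]; rw [Finset.sum_add_distrib, Finset.mul_sum]
      _ = T % 2 ^ (B * n) + 2 ^ (B * n) * (c ⟨n, by omega⟩ + (∑ i, a i / 2 ^ (B * n) % 2 ^ B)) := by
          rw [ihn]; ring
      _ = T % 2 ^ (B * n) + 2 ^ (B * n) * (T / 2 ^ (B * n) % 2 ^ B + 2 ^ B * c ⟨n + 1, by omega⟩) := by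
          rw [← hE]; ring_nf
      _ = T % 2 ^ (B * (n + 1)) + 2 ^ (B * (n + 1)) * c ⟨n + 1, by omega⟩ := by
          rw [hsplit T]
          have : (2 : ℕ) ^ (B * (n + 1)) = 2 ^ (B * n) * 2 ^ B := by
            rw [← pow_add]; ring_nf
          rw [this]; ring

theorem stmt_5 (d B D : ℕ) (hd : 1 ≤ d) (hB : 1 ≤ B) (hD : 1 ≤ D)
    (a : Fin d → ℕ) (T : ℕ)
    (ha : ∀ i, a i < 2 ^ (B * D)) (hT : T < 2 ^ (B * D)) :
    -- sum equals T iff a valid carry sequence exists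
    ((∑ i, a i = T) ↔
      ∃ c : Fin (D + 1) → ℕ,
        c 0 = 0 ∧ c (Fin.last D) = 0 ∧
        (∀ j : Fin (D + 1), 1 ≤ (j : ℕ) → (j : ℕ) ≤ D - 1 → c j ≤ d - 1) ∧
        (∀ j : Fin D,
          (∑ i, a i / 2 ^ (B * (j : ℕ)) % 2 ^ B) + c j.castSucc
            = T / 2 ^ (B * (j : ℕ)) % 2 ^ B + 2 ^ B * c j.succ))
    ∧
    -- when a valid carry sequence exists, it is unique
    (∀ c c' : Fin (D + 1) → ℕ,
      (c 0 = 0 ∧ c (Fin.last D) = 0 ∧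
        (∀ j : Fin (D + 1), 1 ≤ (j : ℕ) → (j : ℕ) ≤ D - 1 → c j ≤ d - 1) ∧
        (∀ j : Fin D,
          (∑ i, a i / 2 ^ (B * (j : ℕ)) % 2 ^ B) + c j.castSucc
            = T / 2 ^ (B * (j : ℕ)) % 2 ^ B + 2 ^ B * c j.succ)) →
      (c' 0 = 0 ∧ c' (Fin.last D) = 0 ∧
        (∀ j : Fin (D + 1), 1 ≤ (j : ℕ) → (j : ℕ) ≤ D - 1 → c' j ≤ d - 1) ∧
        (∀ j : Fin D,
          (∑ i, a i / 2 ^ (B * (j : ℕ)) % 2 ^ B) + c' j.castSucc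
            = T / 2 ^ (B * (j : ℕ)) % 2 ^ B + 2 ^ B * c' j.succ)) →
      c = c') := by
  constructor
  · constructor
    · -- sum = T → exists carry
      intro hsum
      -- exactness facts for each m = 2^(B*j)
      have key : ∀ k : ℕ, T % 2 ^ k ≤ (∑ i, a i % 2 ^ k) ∧
          2 ^ k ∣ (∑ i, a i % 2 ^ k) - T % 2 ^ k := by
        intro k
        set m := 2 ^ k with hm
        have hmpos : 0 < m := Nat.pow_pos (by norm_num)
        have hmod : (∑ i, a i % m) % m = T % m := by
          rw [← Finset.sum_nat_mod, hsum]
        have hle : T % m ≤ ∑ i, a i % m := by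
          calc T % m = (∑ i, a i % m) % m := hmod.symm
            _ ≤ ∑ i, a i % m := Nat.mod_le _ _
        refine ⟨hle, ?_⟩
        have hme : T % m ≡ (∑ i, a i % m) [MOD m] := by
          unfold Nat.ModEq
          simpa using hmod.symm
        exact (Nat.modEq_iff_dvd' hle).mp hme
      set c : Fin (D + 1) → ℕ :=
        fun j => ((∑ i, a i % 2 ^ (B * (j : ℕ))) - T % 2 ^ (B * (j : ℕ))) / 2 ^ (B * (j : ℕ)) with hc
      have cval : ∀ j : Fin (D + 1),
          (∑ i, a i % 2 ^ (B * (j : ℕ))) = T % 2 ^ (B * (j : ℕ)) + 2 ^ (B * (j : ℕ)) * c j := by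
        intro j
        obtain ⟨hle, hdvd⟩ := key (B * (j : ℕ))
        simp only [hc]
        rw [Nat.mul_div_cancel' hdvd]
        omega
      refine ⟨c, ?_, ?_, ?_, ?_⟩
      · simp [hc, Nat.mod_one]
      · -- c (last D) = 0
        have hlt : ∀ x < 2 ^ (B * D), x % 2 ^ (B * D) = x := fun x h => Nat.mod_eq_of_lt h
        simp only [hc, Fin.val_last]
        rw [Finset.sum_congr rfl (fun i _ => hlt (a i) (ha i)), hsum, hlt T hT]
        simp
      · -- bound
        intro j _ _
        have hmpos : 0 < 2 ^ (B * (j : ℕ)) := Nat.pow_pos (by norm_num)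
        have hub : (∑ i, a i % 2 ^ (B * (j : ℕ))) ≤ d * (2 ^ (B * (j : ℕ)) - 1) := by
          calc (∑ i, a i % 2 ^ (B * (j : ℕ)))
              ≤ ∑ _i : Fin d, (2 ^ (B * (j : ℕ)) - 1) :=
                Finset.sum_le_sum (fun i _ => by
                  have := Nat.mod_lt (a i) hmpos; omega)
            _ = d * (2 ^ (B * (j : ℕ)) - 1) := by simp [Finset.sum_const, mul_comm]
        have hclt : c j < d := by
          simp only [hc]
          apply Nat.div_lt_of_lt_mul
          obtain ⟨t, ht⟩ : ∃ t, 2 ^ (B * (j : ℕ)) = t + 1 :=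
            ⟨_, (Nat.succ_pred_eq_of_pos hmpos).symm⟩
          simp only [ht, Nat.add_sub_cancel] at hub ⊢
          have hdist : (t + 1) * d = d * t + d := by ring
          omega
        omega
      · -- block equations
        intro j
        have h1 := cval j.castSucc
        have h2 := cval j.succ
        have hsplit : ∀ x : ℕ, x % 2 ^ (B * ((j : ℕ) + 1))
            = x % 2 ^ (B * (j : ℕ)) + 2 ^ (B * (j : ℕ)) * (x / 2 ^ (B * (j : ℕ)) % 2 ^ B) := by
          intro x
          have : (2 : ℕ) ^ (B * ((j : ℕ) + 1)) = 2 ^ (B * (j : ℕ)) * 2 ^ B := by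
            rw [← pow_add]; ring_nf
          rw [this, Nat.mod_mul]
        have hcs : ((j.castSucc : Fin (D + 1)) : ℕ) = (j : ℕ) := rfl
        have hss : ((j.succ : Fin (D + 1)) : ℕ) = (j : ℕ) + 1 := rfl
        rw [hcs] at h1
        rw [hss] at h2
        rw [hsplit T] at h2
        have h3 : (∑ i, a i % 2 ^ (B * ((j:ℕ) + 1)))
            = (∑ i, a i % 2 ^ (B * (j:ℕ))) + 2 ^ (B * (j:ℕ)) * (∑ i, a i / 2 ^ (B * (j:ℕ)) % 2 ^ B) := by
          simp_rw [hsplit]; rw [Finset.sum_add_distrib, Finset.mul_sum]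
        rw [h3, h1] at h2
        have hmpos : 0 < 2 ^ (B * (j : ℕ)) := Nat.pow_pos (by norm_num)
        have hB2 : (2:ℕ) ^ (B * ((j:ℕ)+1)) = 2 ^ (B * (j:ℕ)) * 2 ^ B := by
          rw [← pow_add]; ring_nf
        rw [hB2] at h2
        have key2 : 2 ^ (B * (j:ℕ)) * (c j.castSucc + (∑ i, a i / 2 ^ (B * (j:ℕ)) % 2 ^ B))
            = 2 ^ (B * (j:ℕ)) * (T / 2 ^ (B * (j:ℕ)) % 2 ^ B + 2 ^ B * c j.succ) := by
          have e1 : 2 ^ (B * (j:ℕ)) * (c j.castSucc + (∑ i, a i / 2 ^ (B * (j:ℕ)) % 2 ^ B))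
              = 2 ^ (B * (j:ℕ)) * c j.castSucc
                + 2 ^ (B * (j:ℕ)) * (∑ i, a i / 2 ^ (B * (j:ℕ)) % 2 ^ B) := by ring
          have e2 : 2 ^ (B * (j:ℕ)) * (T / 2 ^ (B * (j:ℕ)) % 2 ^ B + 2 ^ B * c j.succ)
              = 2 ^ (B * (j:ℕ)) * (T / 2 ^ (B * (j:ℕ)) % 2 ^ B)
                + 2 ^ (B * (j:ℕ)) * 2 ^ B * c j.succ := by ring
          omega
        have := Nat.eq_of_mul_eq_mul_left hmpos key2
        omega
    · -- carry → sum = T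
      rintro ⟨c, h0, hlast, _, heq⟩
      have hinv := carry_invariant d B D a T c h0 heq D (le_refl D)
      have hlt : ∀ x < 2 ^ (B * D), x % 2 ^ (B * D) = x := fun x h => Nat.mod_eq_of_lt h
      rw [Finset.sum_congr rfl (fun i _ => hlt (a i) (ha i)), hlt T hT] at hinv
      have : (⟨D, by omega⟩ : Fin (D + 1)) = Fin.last D := rfl
      rw [this, hlast] at hinv
      simpa using hinv
  · -- uniqueness
    rintro c c' ⟨h0, _, _, heq⟩ ⟨h0', _, _, heq'⟩
    funext j
    obtain ⟨n, hn⟩ := j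
    have h1 := carry_invariant d B D a T c h0 heq n (by omega)
    have h2 := carry_invariant d B D a T c' h0' heq' n (by omega)
    have hmpos : 0 < 2 ^ (B * n) := Nat.pow_pos (by norm_num)
    have : 2 ^ (B * n) * c ⟨n, by omega⟩ = 2 ^ (B * n) * c' ⟨n, by omega⟩ := by omega
    exact Nat.eq_of_mul_eq_mul_left hmpos this
end

section
/- For all integers d ≥ 1 and 0 ≤ m ≤ d, there exist maps φ_x, φ_y : {0,1}^d → {0,1}^{d² + 4dm} such that, setting M := 2dm − m², for all x, y ∈ {0,1}^d: if x·y = m then φ_x(x)·φ_y(y) = M, and if x·y ≠ m then φ_x(x)·φ_y(y) > M. In fact, the maps can be chosen so that φ_x(x)·φ_y(y) = (x·y − m)² + 2dm − m² for all x, y ∈ {0,1}^d. -/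
theorem stmt_7 (d m : ℕ) (hd : 1 ≤ d) (hm : m ≤ d) :
    ∃ φx φy : (Fin d → ℤ) → (Fin (d ^ 2 + 4 * d * m) → ℤ),
      (∀ x : Fin d → ℤ, (∀ i, x i = 0 ∨ x i = 1) →
        ∀ j, φx x j = 0 ∨ φx x j = 1) ∧
      (∀ y : Fin d → ℤ, (∀ i, y i = 0 ∨ y i = 1) →
        ∀ j, φy y j = 0 ∨ φy y j = 1) ∧
      (∀ x y : Fin d → ℤ, (∀ i, x i = 0 ∨ x i = 1) → (∀ i, y i = 0 ∨ y i = 1) →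
        ∑ j, φx x j * φy y j
          = (∑ i, x i * y i - (m : ℤ)) ^ 2 + 2 * (d : ℤ) * m - (m : ℤ) ^ 2) ∧
      (∀ x y : Fin d → ℤ, (∀ i, x i = 0 ∨ x i = 1) → (∀ i, y i = 0 ∨ y i = 1) →
        ((∑ i, x i * y i = (m : ℤ) →
            ∑ j, φx x j * φy y j = 2 * (d : ℤ) * m - (m : ℤ) ^ 2) ∧
         (∑ i, x i * y i ≠ (m : ℤ) →
            2 * (d : ℤ) * m - (m : ℤ) ^ 2 < ∑ j, φx x j * φy y j))) := by
  classical
  have hcard : d ^ 2 + 4 * d * m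
      = Fintype.card ((Fin d × Fin d) ⊕ ((Fin (2 * m) × Fin d) ⊕ (Fin (2 * m) × Fin d))) := by
    simp
    ring
  let e : Fin (d ^ 2 + 4 * d * m)
      ≃ ((Fin d × Fin d) ⊕ ((Fin (2 * m) × Fin d) ⊕ (Fin (2 * m) × Fin d))) :=
    (finCongr hcard).trans (Fintype.equivFin _).symm
  let fx : (Fin d → ℤ) → ((Fin d × Fin d) ⊕ ((Fin (2 * m) × Fin d) ⊕ (Fin (2 * m) × Fin d))) → ℤ :=
    fun x => Sum.elim (fun p => x p.1 * x p.2) (Sum.elim (fun p => 1 - x p.2) (fun p => x p.2))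
  let fy : (Fin d → ℤ) → ((Fin d × Fin d) ⊕ ((Fin (2 * m) × Fin d) ⊕ (Fin (2 * m) × Fin d))) → ℤ :=
    fun y => Sum.elim (fun p => y p.1 * y p.2) (Sum.elim (fun _ => 1) (fun p => 1 - y p.2))
  have hbx : ∀ x : Fin d → ℤ, (∀ i, x i = 0 ∨ x i = 1) →
      ∀ s, fx x s = 0 ∨ fx x s = 1 := by
    intro x hx s
    rcases s with ⟨i, k⟩ | ⟨⟨_, k⟩ | ⟨_, k⟩⟩
    · rcases hx i with h | h <;> rcases hx k with h' | h' <;> simp [fx, h, h']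
    · rcases hx k with h | h <;> simp [fx, h]
    · rcases hx k with h | h <;> simp [fx, h]
  have hby : ∀ y : Fin d → ℤ, (∀ i, y i = 0 ∨ y i = 1) →
      ∀ s, fy y s = 0 ∨ fy y s = 1 := by
    intro y hy s
    rcases s with ⟨i, k⟩ | ⟨⟨_, k⟩ | ⟨_, k⟩⟩
    · rcases hy i with h | h <;> rcases hy k with h' | h' <;> simp [fy, h, h']
    · simp [fy]
    · rcases hy k with h | h <;> simp [fy, h]
  have key : ∀ x y : Fin d → ℤ,
      ∑ j, fx x (e j) * fy y (e j)
        = (∑ i, x i * y i - (m : ℤ)) ^ 2 + 2 * (d : ℤ) * m - (m : ℤ) ^ 2 := by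
    intro x y
    rw [Equiv.sum_comp e (fun s => fx x s * fy y s)]
    have h1 : ∑ p : Fin d × Fin d, (x p.1 * x p.2) * (y p.1 * y p.2)
        = (∑ i, x i * y i) ^ 2 := by
      rw [sq, Finset.sum_mul_sum, Fintype.sum_prod_type]
      refine Finset.sum_congr rfl fun i _ => Finset.sum_congr rfl fun j _ => by ring
    have h2 : ∑ p : Fin (2 * m) × Fin d, (1 - x p.2) * (1 : ℤ)
        = 2 * (m : ℤ) * ((d : ℤ) - ∑ i, x i) := by
      rw [Fintype.sum_prod_type]
      simp only [mul_one, Finset.sum_sub_distrib, Finset.sum_const, Finset.card_univ,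
        Fintype.card_fin, nsmul_eq_mul, smul_eq_mul]
      push_cast
      ring
    have h3 : ∑ p : Fin (2 * m) × Fin d, x p.2 * (1 - y p.2)
        = 2 * (m : ℤ) * ((∑ i, x i) - ∑ i, x i * y i) := by
      rw [Fintype.sum_prod_type]
      simp only [mul_sub, mul_one, Finset.sum_sub_distrib, Finset.sum_const, Finset.card_univ,
        Fintype.card_fin, nsmul_eq_mul, smul_eq_mul]
      push_cast
      ring
    have hsplit : ∑ s : ((Fin d × Fin d) ⊕ ((Fin (2 * m) × Fin d) ⊕ (Fin (2 * m) × Fin d))),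
        fx x s * fy y s
        = (∑ p : Fin d × Fin d, (x p.1 * x p.2) * (y p.1 * y p.2))
          + ((∑ p : Fin (2 * m) × Fin d, (1 - x p.2) * (1 : ℤ))
            + ∑ p : Fin (2 * m) × Fin d, x p.2 * (1 - y p.2)) := by
      rw [Fintype.sum_sum_type, Fintype.sum_sum_type]
      simp only [fx, fy, Sum.elim_inl, Sum.elim_inr]
    rw [hsplit, h1, h2, h3]
    ring
  refine ⟨fun x j => fx x (e j), fun y j => fy y (e j), ?_, ?_, ?_, ?_⟩
  · intro x hx j; exact hbx x hx (e j)
  · intro y hy j; exact hby y hy (e j)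
  · intro x y _ _; exact key x y
  · intro x y _ _
    constructor
    · intro h; rw [key x y, h]; ring
    · intro h
      rw [key x y]
      have hne : (∑ i, x i * y i - (m : ℤ)) ≠ 0 := sub_ne_zero.mpr h
      have h1 : (1 : ℤ) ≤ (∑ i, x i * y i - (m : ℤ)) ^ 2 := by
        rcases lt_or_gt_of_ne hne with hlt | hgt <;> nlinarith
      linarith
end

section
/- For all integers d ≥ 1 and 0 ≤ m ≤ d, there exist maps φ_x, φ_y : {0,1}^d → {0,1}^{2(d² + 4dm)} such that, setting M := (d+m)², for all x, y ∈ {0,1}^d: if x·y = m then φ_x(x)·φ_y(y) = M, and if x·y ≠ m then φ_x(x)·φ_y(y) < M. In fact, the maps can be chosen so that φ_x(x)·φ_y(y) = (d+m)² − (x·y − m)² for all x, y ∈ {0,1}^d. -/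
theorem stmt_8 (d m : ℕ) (hd : 1 ≤ d) (hm : m ≤ d) :
    ∃ φx φy : (Fin d → ℤ) → (Fin (2 * (d ^ 2 + 4 * d * m)) → ℤ),
      (∀ x : Fin d → ℤ, (∀ i, x i = 0 ∨ x i = 1) →
        ∀ j, φx x j = 0 ∨ φx x j = 1) ∧
      (∀ y : Fin d → ℤ, (∀ i, y i = 0 ∨ y i = 1) →
        ∀ j, φy y j = 0 ∨ φy y j = 1) ∧
      (∀ x y : Fin d → ℤ, (∀ i, x i = 0 ∨ x i = 1) → (∀ i, y i = 0 ∨ y i = 1) →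
        ∑ j, φx x j * φy y j
          = ((d : ℤ) + m) ^ 2 - (∑ i, x i * y i - (m : ℤ)) ^ 2) ∧
      (∀ x y : Fin d → ℤ, (∀ i, x i = 0 ∨ x i = 1) → (∀ i, y i = 0 ∨ y i = 1) →
        ((∑ i, x i * y i = (m : ℤ) →
            ∑ j, φx x j * φy y j = ((d : ℤ) + m) ^ 2) ∧
         (∑ i, x i * y i ≠ (m : ℤ) →
            ∑ j, φx x j * φy y j < ((d : ℤ) + m) ^ 2))) := by
  classical
  have hcard : Fintype.card (((Fin d × Fin d) ⊕ (Fin d × Fin d)) ⊕ ((Fin (2 * d * m) ⊕ (Fin (2 * m) × Fin d)) ⊕ Fin (4 * d * m))) = 2 * (d ^ 2 + 4 * d * m) := by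
    simp
    ring
  let e : (((Fin d × Fin d) ⊕ (Fin d × Fin d)) ⊕ ((Fin (2 * d * m) ⊕ (Fin (2 * m) × Fin d)) ⊕ Fin (4 * d * m))) ≃ Fin (2 * (d ^ 2 + 4 * d * m)) := Fintype.equivFinOfCardEq hcard
  let Φx : (Fin d → ℤ) → (((Fin d × Fin d) ⊕ (Fin d × Fin d)) ⊕ ((Fin (2 * d * m) ⊕ (Fin (2 * m) × Fin d)) ⊕ Fin (4 * d * m))) → ℤ := fun x t =>
    match t with
    | .inl (.inl (i, j)) => 1 - x i * x j
    | .inl (.inr (i, j)) => x i * x j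
    | .inr (.inl (.inl _)) => 1
    | .inr (.inl (.inr (_, i))) => x i
    | .inr (.inr _) => 0
  let Φy : (Fin d → ℤ) → (((Fin d × Fin d) ⊕ (Fin d × Fin d)) ⊕ ((Fin (2 * d * m) ⊕ (Fin (2 * m) × Fin d)) ⊕ Fin (4 * d * m))) → ℤ := fun y t =>
    match t with
    | .inl (.inl _) => 1
    | .inl (.inr (i, j)) => 1 - y i * y j
    | .inr (.inl (.inl _)) => 1
    | .inr (.inl (.inr (_, i))) => y i
    | .inr (.inr _) => 0
  have key : ∀ x y : Fin d → ℤ,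
      ∑ j, Φx x (e.symm j) * Φy y (e.symm j)
        = ((d : ℤ) + m) ^ 2 - (∑ i, x i * y i - (m : ℤ)) ^ 2 := by
    intro x y
    have hsum : ∑ j, Φx x (e.symm j) * Φy y (e.symm j)
        = ∑ t : (((Fin d × Fin d) ⊕ (Fin d × Fin d)) ⊕ ((Fin (2 * d * m) ⊕ (Fin (2 * m) × Fin d)) ⊕ Fin (4 * d * m))), Φx x t * Φy y t := Equiv.sum_comp e.symm (fun t => Φx x t * Φy y t)
    rw [hsum]
    have hAA : (∑ i, x i) * (∑ j, x j) = ∑ i, ∑ j, x i * x j := by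
      rw [Finset.sum_mul_sum]
    have hSS : (∑ i, x i * y i) * (∑ j, x j * y j) = ∑ i, ∑ j, (x i * x j) * (y i * y j) := by
      rw [Finset.sum_mul_sum]
      congr 1; ext i; congr 1; ext j; ring
    simp only [Fintype.sum_sum_type, Fintype.sum_prod_type, Φx, Φy, mul_one, one_mul,
      mul_zero, zero_mul, mul_sub, sub_mul, Finset.sum_sub_distrib, Finset.sum_const,
      Finset.card_univ, Fintype.card_fin, Fintype.card_prod, nsmul_eq_mul]
    rw [← hAA, ← hSS]
    push_cast
    ring
  have hbx : ∀ x : Fin d → ℤ, (∀ i, x i = 0 ∨ x i = 1) →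
      ∀ t : (((Fin d × Fin d) ⊕ (Fin d × Fin d)) ⊕ ((Fin (2 * d * m) ⊕ (Fin (2 * m) × Fin d)) ⊕ Fin (4 * d * m))), Φx x t = 0 ∨ Φx x t = 1 := by
    intro x hx t
    rcases t with (⟨i, k⟩ | ⟨i, k⟩) | ((_ | ⟨_, i⟩) | _) <;> dsimp only [Φx]
    · rcases hx i with h | h <;> rcases hx k with h' | h' <;> simp [h, h']
    · rcases hx i with h | h <;> rcases hx k with h' | h' <;> simp [h, h']
    · right; rfl
    · exact hx i
    · left; rfl
  have hby : ∀ y : Fin d → ℤ, (∀ i, y i = 0 ∨ y i = 1) →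
      ∀ t : (((Fin d × Fin d) ⊕ (Fin d × Fin d)) ⊕ ((Fin (2 * d * m) ⊕ (Fin (2 * m) × Fin d)) ⊕ Fin (4 * d * m))), Φy y t = 0 ∨ Φy y t = 1 := by
    intro y hy t
    rcases t with (⟨i, k⟩ | ⟨i, k⟩) | ((_ | ⟨_, i⟩) | _) <;> dsimp only [Φy]
    · right; rfl
    · rcases hy i with h | h <;> rcases hy k with h' | h' <;> simp [h, h']
    · right; rfl
    · exact hy i
    · left; rfl
  refine ⟨fun x j => Φx x (e.symm j), fun y j => Φy y (e.symm j), ?_, ?_, ?_, ?_⟩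
  · intro x hx j
    exact hbx x hx _
  · intro y hy j
    exact hby y hy _
  · intro x y hx hy
    exact key x y
  · intro x y hx hy
    constructor
    · intro hs
      rw [key x y, hs]
      simp
    · intro hs
      rw [key x y]
      have h0 : ∑ i, x i * y i - (m : ℤ) ≠ 0 := sub_ne_zero.mpr hs
      have : (0:ℤ) < (∑ i, x i * y i - (m : ℤ)) ^ 2 :=
        (sq_nonneg _).lt_of_ne (Ne.symm (pow_ne_zero 2 h0))
      linarith
end

section
/- Let d ≥ 1 be an integer and x, y ∈ {0,1}^d. For 0 ≤ t ≤ d, let e^{[t]} ∈ {0,1}^d denote the vector whose first t coordinates are 1 and whose remaining coordinates are 0. Define p_x := x ∘ e^{[d−‖x‖₁]} ∘ e^{[0]} ∈ {0,1}^{3d} and q_y := y ∘ e^{[0]} ∘ e^{[d−‖y‖₁]} ∈ {0,1}^{3d}, where ∘ denotes concatenation of vectors. Then: (i) p_x and q_y each have exactly d coordinates equal to 1; (ii) p_x·q_y = x·y; and (iii) ‖p_x − q_y‖₁ = 2·(d − x·y). -/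
open Finset

theorem stmt_10 (d : ℕ) (hd : 1 ≤ d) (x y : Fin d → ℕ)
    (hx : ∀ i, x i = 0 ∨ x i = 1) (hy : ∀ i, y i = 0 ∨ y i = 1) :
    -- p_x = x ∘ e^[d - ‖x‖₁] ∘ e^[0],  q_y = y ∘ e^[0] ∘ e^[d - ‖y‖₁]
    let px : Fin (3 * d) → ℕ := fun j =>
      if h : (j : ℕ) < d then x ⟨j, h⟩
      else if (j : ℕ) < d + (d - ∑ i, x i) then 1 else 0
    let qy : Fin (3 * d) → ℕ := fun j =>
      if h : (j : ℕ) < d then y ⟨j, h⟩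
      else if (j : ℕ) < 2 * d then 0
      else if (j : ℕ) < 2 * d + (d - ∑ i, y i) then 1 else 0
    -- (i) exactly d ones each, (ii) inner product preserved, (iii) ℓ₁ distance
    ((Finset.univ.filter fun j => px j = 1).card = d ∧
     (Finset.univ.filter fun j => qy j = 1).card = d ∧
     ∑ j, px j * qy j = ∑ i, x i * y i ∧
     ∑ j, |(px j : ℤ) - (qy j : ℤ)|
        = 2 * ((d : ℤ) - ∑ i, (x i : ℤ) * (y i : ℤ))) := by
  intro px qy
  have hx1 : ∀ i, x i ≤ 1 := fun i => by rcases hx i with h | h <;> omega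
  have hy1 : ∀ i, y i ≤ 1 := fun i => by rcases hy i with h | h <;> omega
  have hSd : (∑ i, x i) ≤ d := by
    calc (∑ i, x i) ≤ ∑ _i : Fin d, 1 := Finset.sum_le_sum fun i _ => hx1 i
    _ = d := by simp
  have hTd : (∑ i, y i) ≤ d := by
    calc (∑ i, y i) ≤ ∑ _i : Fin d, 1 := Finset.sum_le_sum fun i _ => hy1 i
    _ = d := by simp
  set S := ∑ i, x i with hS
  set T := ∑ i, y i with hT
  -- generic splitter
  have split : ∀ {M : Type} [AddCommMonoid M] (f : ℕ → M),
      ∑ j : Fin (3 * d), f (j : ℕ)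
        = (∑ j ∈ range d, f j) + (∑ j ∈ Ico d (2 * d), f j)
          + (∑ j ∈ Ico (2 * d) (3 * d), f j) := by
    intro M _ f
    rw [Fin.sum_univ_eq_sum_range, range_eq_Ico,
      ← Finset.sum_Ico_consecutive f (Nat.zero_le d) (by omega : d ≤ 3 * d),
      ← Finset.sum_Ico_consecutive f (by omega : d ≤ 2 * d) (by omega : 2 * d ≤ 3 * d),
      ← range_eq_Ico, add_assoc]
  -- first-block identification with sums over Fin d
  have firstblock : ∀ {M : Type} [AddCommMonoid M] (g : Fin d → M),
      (∑ j ∈ range d, if h : j < d then g ⟨j, h⟩ else 0) = ∑ i, g i := by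
    intro M _ g
    rw [← Fin.sum_univ_eq_sum_range (fun n => if h : n < d then g ⟨n, h⟩ else 0) d]
    exact Finset.sum_congr rfl fun i _ => by simp [i.isLt]
  -- (i) for px
  have hpx01 : ∀ j, px j = 0 ∨ px j = 1 := by
    intro j
    simp only [px]
    split
    · exact hx _
    · split <;> simp
  have hqy01 : ∀ j, qy j = 0 ∨ qy j = 1 := by
    intro j
    simp only [qy]
    split
    · exact hy _
    · split
      · left; rfl
      · split <;> simp
  have cardeq : ∀ (f : Fin (3 * d) → ℕ), (∀ j, f j = 0 ∨ f j = 1) →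
      (Finset.univ.filter fun j => f j = 1).card = ∑ j, f j := by
    intro f hf
    rw [Finset.card_filter]
    exact Finset.sum_congr rfl fun j _ => by rcases hf j with h | h <;> simp [h]
  have hpxsum : ∑ j, px j = d := by
    rw [show (∑ j, px j) = _ from split (fun n => if h : n < d then x ⟨n, h⟩
      else if n < d + (d - S) then 1 else 0)]
    have e1 : (∑ j ∈ range d, (if h : j < d then x ⟨j, h⟩
        else if j < d + (d - S) then 1 else 0)) = S := by
      rw [hS, ← firstblock x]
      refine Finset.sum_congr rfl fun j hj => ?_
      simp only [mem_range] at hj; rw [dif_pos hj, dif_pos hj]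
    have e2 : (∑ j ∈ Ico d (2 * d), (if h : j < d then x ⟨j, h⟩
        else if j < d + (d - S) then 1 else 0)) = d - S := by
      rw [← Finset.sum_Ico_consecutive _ (by omega : d ≤ d + (d - S))
        (by omega : d + (d - S) ≤ 2 * d)]
      have f1 : (∑ j ∈ Ico d (d + (d - S)), (if h : j < d then x ⟨j, h⟩
          else if j < d + (d - S) then 1 else 0))
          = ∑ _j ∈ Ico d (d + (d - S)), 1 := by
        refine Finset.sum_congr rfl fun j hj => ?_
        simp only [mem_Ico] at hj
        rw [dif_neg (by omega), if_pos hj.2]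
      have f2 : (∑ j ∈ Ico (d + (d - S)) (2 * d), (if h : j < d then x ⟨j, h⟩
          else if j < d + (d - S) then 1 else 0)) = 0 := by
        refine Finset.sum_eq_zero fun j hj => ?_
        simp only [mem_Ico] at hj
        rw [dif_neg (by omega), if_neg (by omega)]
      rw [f1, f2, Finset.sum_const, Nat.card_Ico]; simp
    have e3 : (∑ j ∈ Ico (2 * d) (3 * d), (if h : j < d then x ⟨j, h⟩
        else if j < d + (d - S) then 1 else 0)) = 0 := by
      refine Finset.sum_eq_zero fun j hj => ?_
      simp only [mem_Ico] at hj; rw [dif_neg (by omega), if_neg (by omega)]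
    rw [e1, e2, e3]; omega
  have hqysum : ∑ j, qy j = d := by
    rw [show (∑ j, qy j) = _ from split (fun n => if h : n < d then y ⟨n, h⟩
      else if n < 2 * d then 0 else if n < 2 * d + (d - T) then 1 else 0)]
    have e1 : (∑ j ∈ range d, (if h : j < d then y ⟨j, h⟩
        else if j < 2 * d then 0 else if j < 2 * d + (d - T) then 1 else 0)) = T := by
      rw [hT, ← firstblock y]
      refine Finset.sum_congr rfl fun j hj => ?_
      simp only [mem_range] at hj; rw [dif_pos hj, dif_pos hj]
    have e2 : (∑ j ∈ Ico d (2 * d), (if h : j < d then y ⟨j, h⟩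
        else if j < 2 * d then 0 else if j < 2 * d + (d - T) then 1 else 0)) = 0 := by
      refine Finset.sum_eq_zero fun j hj => ?_
      simp only [mem_Ico] at hj; rw [dif_neg (by omega), if_pos (by omega)]
    have e3 : (∑ j ∈ Ico (2 * d) (3 * d), (if h : j < d then y ⟨j, h⟩
        else if j < 2 * d then 0 else if j < 2 * d + (d - T) then 1 else 0)) = d - T := by
      rw [← Finset.sum_Ico_consecutive _ (by omega : 2 * d ≤ 2 * d + (d - T))
        (by omega : 2 * d + (d - T) ≤ 3 * d)]
      have f1 : (∑ j ∈ Ico (2 * d) (2 * d + (d - T)), (if h : j < d then y ⟨j, h⟩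
          else if j < 2 * d then 0 else if j < 2 * d + (d - T) then 1 else 0))
          = ∑ _j ∈ Ico (2 * d) (2 * d + (d - T)), 1 := by
        refine Finset.sum_congr rfl fun j hj => ?_
        simp only [mem_Ico] at hj
        rw [dif_neg (by omega), if_neg (by omega), if_pos hj.2]
      have f2 : (∑ j ∈ Ico (2 * d + (d - T)) (3 * d), (if h : j < d then y ⟨j, h⟩
          else if j < 2 * d then 0 else if j < 2 * d + (d - T) then 1 else 0)) = 0 := by
        refine Finset.sum_eq_zero fun j hj => ?_
        simp only [mem_Ico] at hj
        rw [dif_neg (by omega), if_neg (by omega), if_neg (by omega)]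
      rw [f1, f2, Finset.sum_const, Nat.card_Ico]; simp
    rw [e1, e2, e3]; omega
  refine ⟨by rw [cardeq px hpx01]; exact hpxsum,
          by rw [cardeq qy hqy01]; exact hqysum, ?_, ?_⟩
  · -- inner product
    rw [show (∑ j, px j * qy j) = _ from split (fun n =>
      (if h : n < d then x ⟨n, h⟩ else if n < d + (d - S) then 1 else 0) *
      (if h : n < d then y ⟨n, h⟩ else if n < 2 * d then 0
        else if n < 2 * d + (d - T) then 1 else 0))]
    have e1 : (∑ j ∈ range d,
        (if h : j < d then x ⟨j, h⟩ else if j < d + (d - S) then 1 else 0) *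
        (if h : j < d then y ⟨j, h⟩ else if j < 2 * d then 0
          else if j < 2 * d + (d - T) then 1 else 0)) = ∑ i, x i * y i := by
      rw [← firstblock (fun i => x i * y i)]
      refine Finset.sum_congr rfl fun j hj => ?_
      simp only [mem_range] at hj
      rw [dif_pos hj, dif_pos hj, dif_pos hj]
    have e2 : (∑ j ∈ Ico d (2 * d),
        (if h : j < d then x ⟨j, h⟩ else if j < d + (d - S) then 1 else 0) *
        (if h : j < d then y ⟨j, h⟩ else if j < 2 * d then 0
          else if j < 2 * d + (d - T) then 1 else 0)) = 0 := by
      refine Finset.sum_eq_zero fun j hj => ?_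
      simp only [mem_Ico] at hj
      rw [dif_neg (by omega : ¬ j < d), dif_neg (by omega : ¬ j < d),
        if_pos (by omega : j < 2 * d), mul_zero]
    have e3 : (∑ j ∈ Ico (2 * d) (3 * d),
        (if h : j < d then x ⟨j, h⟩ else if j < d + (d - S) then 1 else 0) *
        (if h : j < d then y ⟨j, h⟩ else if j < 2 * d then 0
          else if j < 2 * d + (d - T) then 1 else 0)) = 0 := by
      refine Finset.sum_eq_zero fun j hj => ?_
      simp only [mem_Ico] at hj
      rw [dif_neg (by omega : ¬ j < d), if_neg (by omega : ¬ j < d + (d - S)), zero_mul]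
    rw [e1, e2, e3]
    omega
  · -- ℓ₁ distance
    rw [show (∑ j, |(px j : ℤ) - (qy j : ℤ)|) = _ from split (fun n =>
      |(((if h : n < d then x ⟨n, h⟩ else if n < d + (d - S) then 1 else 0 : ℕ)) : ℤ) -
       (((if h : n < d then y ⟨n, h⟩ else if n < 2 * d then 0
        else if n < 2 * d + (d - T) then 1 else 0 : ℕ)) : ℤ)|)]
    have e1 : (∑ j ∈ range d,
        |(((if h : j < d then x ⟨j, h⟩ else if j < d + (d - S) then 1 else 0 : ℕ)) : ℤ) -
         (((if h : j < d then y ⟨j, h⟩ else if j < 2 * d then 0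
          else if j < 2 * d + (d - T) then 1 else 0 : ℕ)) : ℤ)|)
        = (S : ℤ) + T - 2 * ∑ i, (x i : ℤ) * (y i : ℤ) := by
      have step : (∑ j ∈ range d,
          |(((if h : j < d then x ⟨j, h⟩ else if j < d + (d - S) then 1 else 0 : ℕ)) : ℤ) -
           (((if h : j < d then y ⟨j, h⟩ else if j < 2 * d then 0
            else if j < 2 * d + (d - T) then 1 else 0 : ℕ)) : ℤ)|)
          = ∑ i : Fin d, |((x i : ℤ)) - (y i : ℤ)| := by
        rw [← firstblock (fun i => |((x i : ℤ)) - (y i : ℤ)|)]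
        refine Finset.sum_congr rfl fun j hj => ?_
        simp only [mem_range] at hj
        rw [dif_pos hj, dif_pos hj, dif_pos hj]
      rw [step]
      have habs : ∀ i : Fin d, |((x i : ℤ)) - (y i : ℤ)|
          = (x i : ℤ) + (y i : ℤ) - 2 * ((x i : ℤ) * (y i : ℤ)) := by
        intro i
        rcases hx i with h | h <;> rcases hy i with h' | h' <;> simp [h, h']
      rw [Finset.sum_congr rfl fun i _ => habs i, Finset.sum_sub_distrib,
        Finset.sum_add_distrib, ← Finset.mul_sum]
      have hcS : (∑ i, ((x i : ℤ))) = (S : ℤ) := by rw [hS]; push_cast; rfl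
      have hcT : (∑ i, ((y i : ℤ))) = (T : ℤ) := by rw [hT]; push_cast; rfl
      rw [hcS, hcT]
    have e2 : (∑ j ∈ Ico d (2 * d),
        |(((if h : j < d then x ⟨j, h⟩ else if j < d + (d - S) then 1 else 0 : ℕ)) : ℤ) -
         (((if h : j < d then y ⟨j, h⟩ else if j < 2 * d then 0
          else if j < 2 * d + (d - T) then 1 else 0 : ℕ)) : ℤ)|)
        = ((d : ℤ) - S) := by
      have step : ∀ j ∈ Ico d (2 * d),
          |(((if h : j < d then x ⟨j, h⟩ else if j < d + (d - S) then 1 else 0 : ℕ)) : ℤ) -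
           (((if h : j < d then y ⟨j, h⟩ else if j < 2 * d then 0
            else if j < 2 * d + (d - T) then 1 else 0 : ℕ)) : ℤ)|
          = ((if j < d + (d - S) then 1 else 0 : ℕ) : ℤ) := by
        intro j hj
        simp only [mem_Ico] at hj
        rw [dif_neg (by omega : ¬ j < d), dif_neg (by omega : ¬ j < d),
          if_pos (by omega : j < 2 * d)]
        push_cast
        rw [sub_zero, abs_of_nonneg (by positivity)]
      rw [Finset.sum_congr rfl step]
      rw [← Finset.sum_Ico_consecutive _ (by omega : d ≤ d + (d - S))
        (by omega : d + (d - S) ≤ 2 * d)]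
      have f1 : (∑ j ∈ Ico d (d + (d - S)), ((if j < d + (d - S) then 1 else 0 : ℕ) : ℤ))
          = ∑ _j ∈ Ico d (d + (d - S)), (1 : ℤ) := by
        refine Finset.sum_congr rfl fun j hj => ?_
        simp only [mem_Ico] at hj; rw [if_pos hj.2]; norm_num
      have f2 : (∑ j ∈ Ico (d + (d - S)) (2 * d),
          ((if j < d + (d - S) then 1 else 0 : ℕ) : ℤ)) = 0 := by
        refine Finset.sum_eq_zero fun j hj => ?_
        simp only [mem_Ico] at hj; rw [if_neg (by omega)]; norm_num
      rw [f1, f2, Finset.sum_const, Nat.card_Ico]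
      simp only [nsmul_eq_mul, mul_one, add_zero]
      omega
    have e3 : (∑ j ∈ Ico (2 * d) (3 * d),
        |(((if h : j < d then x ⟨j, h⟩ else if j < d + (d - S) then 1 else 0 : ℕ)) : ℤ) -
         (((if h : j < d then y ⟨j, h⟩ else if j < 2 * d then 0
          else if j < 2 * d + (d - T) then 1 else 0 : ℕ)) : ℤ)|)
        = ((d : ℤ) - T) := by
      have step : ∀ j ∈ Ico (2 * d) (3 * d),
          |(((if h : j < d then x ⟨j, h⟩ else if j < d + (d - S) then 1 else 0 : ℕ)) : ℤ) -
           (((if h : j < d then y ⟨j, h⟩ else if j < 2 * d then 0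
            else if j < 2 * d + (d - T) then 1 else 0 : ℕ)) : ℤ)|
          = ((if j < 2 * d + (d - T) then 1 else 0 : ℕ) : ℤ) := by
        intro j hj
        simp only [mem_Ico] at hj
        rw [dif_neg (by omega : ¬ j < d), dif_neg (by omega : ¬ j < d),
          if_neg (by omega : ¬ j < d + (d - S)), if_neg (by omega : ¬ j < 2 * d)]
        push_cast
        rw [zero_sub, abs_neg, abs_of_nonneg (by positivity)]
      rw [Finset.sum_congr rfl step]
      rw [← Finset.sum_Ico_consecutive _ (by omega : 2 * d ≤ 2 * d + (d - T))
        (by omega : 2 * d + (d - T) ≤ 3 * d)]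
      have f1 : (∑ j ∈ Ico (2 * d) (2 * d + (d - T)),
          ((if j < 2 * d + (d - T) then 1 else 0 : ℕ) : ℤ))
          = ∑ _j ∈ Ico (2 * d) (2 * d + (d - T)), (1 : ℤ) := by
        refine Finset.sum_congr rfl fun j hj => ?_
        simp only [mem_Ico] at hj; rw [if_pos hj.2]; norm_num
      have f2 : (∑ j ∈ Ico (2 * d + (d - T)) (3 * d),
          ((if j < 2 * d + (d - T) then 1 else 0 : ℕ) : ℤ)) = 0 := by
        refine Finset.sum_eq_zero fun j hj => ?_
        simp only [mem_Ico] at hj; rw [if_neg (by omega)]; norm_num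
      rw [f1, f2, Finset.sum_const, Nat.card_Ico]
      simp only [nsmul_eq_mul, mul_one, add_zero]
      omega
    rw [e1, e2, e3]
    ring
end
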